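/- Let U, X be jointly distributed finite random variables, let Y = f(X) for a deterministic function f, let S ~ Bernoulli(p) be independent of (U, X), and set Z = X if S = 0 and Z = ? if S = 1 (with U–X–(Y,Z) a Markov chain). Then I(X; Y, Z | U) + I(U; Z) = H(Y) − p·I(U; Y) + (1−p)·H(X | Y). -/
import Mathlib


open Finset
open scoped Classical

noncomputable section

/-- Probability that the random variable `X` takes the value `a`, under the
probability mass function `μ` on the finite sample space `Ω`. -/
def pr {Ω α : Type*} [Fintype Ω] (μ : Ω → ℝ) (X : Ω → α) (a : α) : ℝ :=
  ∑ ω, if X ω = a then μ ω else 0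

/-- `μ` is a probability mass function. -/
def IsPMF {Ω : Type*} [Fintype Ω] (μ : Ω → ℝ) : Prop :=
  (∀ ω, 0 ≤ μ ω) ∧ ∑ ω, μ ω = 1

/-- Shannon entropy (base 2) of a finite random variable. -/
def ent {Ω α : Type*} [Fintype Ω] [Fintype α] (μ : Ω → ℝ) (X : Ω → α) : ℝ :=
  -∑ a, pr μ X a * Real.logb 2 (pr μ X a)

/-- Mutual information `I(X;Y)` (base 2). -/
def mi {Ω α β : Type*} [Fintype Ω] [Fintype α] [Fintype β]
    (μ : Ω → ℝ) (X : Ω → α) (Y : Ω → β) : ℝ :=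
  ent μ X + ent μ Y - ent μ (fun ω => (X ω, Y ω))

/-- Conditional entropy `H(X|Y)` (base 2). -/
def cent {Ω α β : Type*} [Fintype Ω] [Fintype α] [Fintype β]
    (μ : Ω → ℝ) (X : Ω → α) (Y : Ω → β) : ℝ :=
  ent μ (fun ω => (X ω, Y ω)) - ent μ Y

/-- Conditional mutual information `I(X;Y|Z)` (base 2). -/
def cmi {Ω α β γ : Type*} [Fintype Ω] [Fintype α] [Fintype β] [Fintype γ]
    (μ : Ω → ℝ) (X : Ω → α) (Y : Ω → β) (Z : Ω → γ) : ℝ :=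
  ent μ (fun ω => (X ω, Z ω)) + ent μ (fun ω => (Y ω, Z ω))
    - ent μ (fun ω => (X ω, Y ω, Z ω)) - ent μ Z

/-- Independence of two finite random variables. -/
def IndepRV {Ω α β : Type*} [Fintype Ω] (μ : Ω → ℝ) (X : Ω → α) (Y : Ω → β) : Prop :=
  ∀ a b, pr μ (fun ω => (X ω, Y ω)) (a, b) = pr μ X a * pr μ Y b

section Aux
variable {Ω : Type*} [Fintype Ω] (μ : Ω → ℝ)

lemma pr_nonneg (hμ : IsPMF μ) {α : Type*} (W : Ω → α) (a : α) : 0 ≤ pr μ W a := by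
  apply Finset.sum_nonneg
  intro ω _
  split <;> simp [hμ.1 ω]

lemma pr_sum_one (hμ : IsPMF μ) {α : Type*} [Fintype α] (W : Ω → α) :
    ∑ a, pr μ W a = 1 := by
  unfold pr
  rw [Finset.sum_comm]
  simp [hμ.2]

lemma pr_comp {α β : Type*} [Fintype α] (T : Ω → α) (g : α → β) (b : β) :
    pr μ (fun ω => g (T ω)) b = ∑ t, if g t = b then pr μ T t else 0 := by
  unfold pr
  have : ∀ t : α, (if g t = b then ∑ ω, if T ω = t then μ ω else 0 else 0)
      = ∑ ω, if g t = b ∧ T ω = t then μ ω else 0 := by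
    intro t; by_cases h : g t = b <;> simp [h]
  simp only [this]
  rw [Finset.sum_comm]
  refine Finset.sum_congr rfl fun ω _ => ?_
  rw [Finset.sum_eq_single (T ω)]
  · simp
  · intro t _ ht
    have hne : ¬(g t = b ∧ T ω = t) := fun hh => ht hh.2.symm
    simp [hne]
  · simp

lemma ent_comp_inj {α β : Type*} [Fintype α] [Fintype β] (T : Ω → α) (g : α → β)
    (hg : Function.Injective g) :
    ent μ (fun ω => g (T ω)) = ent μ T := by
  unfold ent
  congr 1
  have hz : ∀ b ∈ Finset.univ \ Finset.image g Finset.univ,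
      pr μ (fun ω => g (T ω)) b * Real.logb 2 (pr μ (fun ω => g (T ω)) b) = 0 := by
    intro b hb
    simp only [Finset.mem_sdiff, Finset.mem_image, Finset.mem_univ, true_and] at hb
    have : pr μ (fun ω => g (T ω)) b = 0 := by
      unfold pr
      apply Finset.sum_eq_zero
      intro ω _
      have : g (T ω) ≠ b := fun h => hb (⟨T ω, h⟩ : ∃ a, g a = b)
      simp [this]
    simp [this]
  rw [← Finset.sum_subset (Finset.subset_univ (Finset.image g Finset.univ))
    (fun b _ hb => hz b (by simp [hb]))]
  rw [Finset.sum_image (fun a _ a' _ h => hg h)]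
  refine Finset.sum_congr rfl fun a _ => ?_
  have : pr μ (fun ω => g (T ω)) (g a) = pr μ T a := by
    unfold pr
    refine Finset.sum_congr rfl fun ω _ => ?_
    simp [hg.eq_iff]
  rw [this]

lemma indep_comp {τ δ : Type*} [Fintype τ] (S : Ω → Bool) (T : Ω → τ)
    (h : IndepRV μ S T) (g : τ → δ) : IndepRV μ S (fun ω => g (T ω)) := by
  intro s b
  have h1 := pr_comp μ (fun ω => (S ω, T ω)) (fun st => (st.1, g st.2)) (s, b)
  have h2 := pr_comp μ T g b
  rw [show (fun ω => (S ω, g (T ω))) = (fun ω => ((fun st : Bool × τ => (st.1, g st.2)) ((S ω, T ω)))) from rfl, h1]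
  rw [Fintype.sum_prod_type]
  dsimp only
  trans (∑ s' : Bool, ∑ t : τ, (if s' = s then pr μ S s' else 0) * (if g t = b then pr μ T t else 0))
  · refine Finset.sum_congr rfl fun s' _ => Finset.sum_congr rfl fun t _ => ?_
    rcases eq_or_ne s' s with h3 | h3
    · subst h3
      rcases eq_or_ne (g t) b with h4 | h4
      · subst h4; simp [h s' t]
      · simp [h4, Prod.ext_iff]
    · simp [h3, Prod.ext_iff]
  · rw [← Finset.sum_mul_sum, ← h2]
    simp [Finset.sum_ite_eq']

lemma pr_S_false {S : Ω → Bool} {p : ℝ} (hμ : IsPMF μ) (hS : pr μ S true = p) :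
    pr μ S false = 1 - p := by
  have := pr_sum_one μ hμ S
  rw [Fintype.sum_bool, hS] at this
  linarith

lemma F_mul {p x : ℝ} (hp : 0 ≤ p) (hx : 0 ≤ x) :
    (p * x) * Real.logb 2 (p * x) = x * (p * Real.logb 2 p) + p * (x * Real.logb 2 x) := by
  rcases eq_or_lt_of_le hp with h | h
  · simp [← h]
  rcases eq_or_lt_of_le hx with h' | h'
  · simp [← h']
  rw [Real.logb_mul h.ne' h'.ne']; ring

lemma ent_mix {τ δ₁ δ₂ : Type*} [Fintype τ] [Fintype δ₁] [Fintype δ₂]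
    (hμ : IsPMF μ) (S : Ω → Bool) (T : Ω → τ) (p : ℝ)
    (hp : p ∈ Set.Icc (0:ℝ) 1) (hS : pr μ S true = p)
    (hindep : IndepRV μ S T) (A : τ → δ₁) (B : τ → δ₂) :
    ent μ (fun ω => if S ω then (Sum.inl (A (T ω)) : δ₁ ⊕ δ₂) else Sum.inr (B (T ω)))
      = -(p * Real.logb 2 p) - ((1-p) * Real.logb 2 (1-p))
        + p * ent μ (fun ω => A (T ω)) + (1-p) * ent μ (fun ω => B (T ω)) := by
  have hq := pr_S_false μ hμ hS
  have hA : IndepRV μ S (fun ω => A (T ω)) := indep_comp μ S T hindep A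
  have hB : IndepRV μ S (fun ω => B (T ω)) := indep_comp μ S T hindep B
  have hinl : ∀ a : δ₁,
      pr μ (fun ω => if S ω then (Sum.inl (A (T ω)) : δ₁ ⊕ δ₂) else Sum.inr (B (T ω))) (Sum.inl a)
        = p * pr μ (fun ω => A (T ω)) a := by
    intro a
    have : pr μ (fun ω => if S ω then (Sum.inl (A (T ω)) : δ₁ ⊕ δ₂) else Sum.inr (B (T ω))) (Sum.inl a)
        = pr μ (fun ω => (S ω, A (T ω))) (true, a) := by
      unfold pr
      refine Finset.sum_congr rfl fun ω _ => ?_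
      by_cases h : S ω <;> simp [h, Prod.ext_iff]
    rw [this, hA true a, hS]
  have hinr : ∀ b : δ₂,
      pr μ (fun ω => if S ω then (Sum.inl (A (T ω)) : δ₁ ⊕ δ₂) else Sum.inr (B (T ω))) (Sum.inr b)
        = (1-p) * pr μ (fun ω => B (T ω)) b := by
    intro b
    have : pr μ (fun ω => if S ω then (Sum.inl (A (T ω)) : δ₁ ⊕ δ₂) else Sum.inr (B (T ω))) (Sum.inr b)
        = pr μ (fun ω => (S ω, B (T ω))) (false, b) := by
      unfold pr
      refine Finset.sum_congr rfl fun ω _ => ?_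
      by_cases h : S ω <;> simp [h, Prod.ext_iff]
    rw [this, hB false b, hq]
  unfold ent
  rw [Fintype.sum_sum_type]
  simp only [hinl, hinr]
  have e1 : ∀ a : δ₁, (p * pr μ (fun ω => A (T ω)) a) * Real.logb 2 (p * pr μ (fun ω => A (T ω)) a)
      = pr μ (fun ω => A (T ω)) a * (p * Real.logb 2 p)
        + p * (pr μ (fun ω => A (T ω)) a * Real.logb 2 (pr μ (fun ω => A (T ω)) a)) :=
    fun a => F_mul hp.1 (pr_nonneg μ hμ _ a)
  have e2 : ∀ b : δ₂, ((1-p) * pr μ (fun ω => B (T ω)) b) * Real.logb 2 ((1-p) * pr μ (fun ω => B (T ω)) b)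
      = pr μ (fun ω => B (T ω)) b * ((1-p) * Real.logb 2 (1-p))
        + (1-p) * (pr μ (fun ω => B (T ω)) b * Real.logb 2 (pr μ (fun ω => B (T ω)) b)) :=
    fun b => F_mul (by linarith [hp.2]) (pr_nonneg μ hμ _ b)
  simp only [e1, e2]
  rw [Finset.sum_add_distrib, Finset.sum_add_distrib, ← Finset.sum_mul, ← Finset.mul_sum,
    ← Finset.sum_mul, ← Finset.mul_sum, pr_sum_one μ hμ, pr_sum_one μ hμ]
  ring

end Aux


lemma ent_unit {Ω : Type*} [Fintype Ω] (μ : Ω → ℝ) (hμ : IsPMF μ) :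
    ent μ (fun _ : Ω => ()) = 0 := by
  simp [ent, pr, hμ.2]

theorem stmt14' {Ω α β γ : Type*} [Fintype Ω] [Fintype α] [Fintype β] [Fintype γ]
    (μ : Ω → ℝ) (hμ : IsPMF μ) (U : Ω → α) (X : Ω → β) (Y : Ω → γ)
    (f : β → γ) (hf : ∀ ω, Y ω = f (X ω))
    (S : Ω → Bool) (p : ℝ) (hp : p ∈ Set.Icc (0:ℝ) 1) (hS : pr μ S true = p)
    (hindep : IndepRV μ S (fun ω => (U ω, X ω))) :
    (ent μ (fun ω => (X ω, U ω))
      + ent μ (fun ω => ((Y ω, if S ω then (none : Option β) else some (X ω)), U ω))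
      - ent μ (fun ω => (X ω, (Y ω, if S ω then (none : Option β) else some (X ω)), U ω))
      - ent μ U)
      + (ent μ U + ent μ (fun ω => if S ω then (none : Option β) else some (X ω))
        - ent μ (fun ω => (U ω, if S ω then (none : Option β) else some (X ω))))
      = ent μ Y - p * (ent μ U + ent μ Y - ent μ (fun ω => (U ω, Y ω)))
        + (1 - p) * (ent μ (fun ω => (X ω, Y ω)) - ent μ Y) := by
  have hY : Y = fun ω => f (X ω) := funext hf
  subst hY
  -- E1
  have E1 : ent μ (fun ω => (X ω, U ω)) = ent μ (fun ω => (U ω, X ω)) :=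
    ent_comp_inj μ (fun ω => (U ω, X ω)) Prod.swap Prod.swap_injective
  -- E2
  have hg2 : Function.Injective
      (Sum.elim (fun uc : α × γ => ((uc.2, (none : Option β)), uc.1))
        (fun ux : α × β => ((f ux.2, some ux.2), ux.1))) := by
    intro a b hab
    rcases a with a | a <;> rcases b with b | b <;>
      simp [Prod.ext_iff] at hab ⊢ <;> tauto
  have E2 : ent μ (fun ω => ((f (X ω), if S ω then (none : Option β) else some (X ω)), U ω))
      = -(p * Real.logb 2 p) - ((1-p) * Real.logb 2 (1-p))
        + p * ent μ (fun ω => (U ω, f (X ω))) + (1-p) * ent μ (fun ω => (U ω, X ω)) := by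
    have hrec := ent_comp_inj μ
      (fun ω => if S ω then (Sum.inl (U ω, f (X ω)) : (α × γ) ⊕ (α × β)) else Sum.inr (U ω, X ω))
      _ hg2
    rw [show (fun ω => ((f (X ω), if S ω then (none : Option β) else some (X ω)), U ω))
        = (fun ω => Sum.elim (fun uc : α × γ => ((uc.2, (none : Option β)), uc.1))
            (fun ux : α × β => ((f ux.2, some ux.2), ux.1))
            (if S ω then (Sum.inl (U ω, f (X ω)) : (α × γ) ⊕ (α × β)) else Sum.inr (U ω, X ω))) from by
      funext ω; by_cases h : S ω <;> simp [h]]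
    rw [hrec]
    exact ent_mix μ hμ S (fun ω => (U ω, X ω)) p hp hS hindep
      (fun t => (t.1, f t.2)) (fun t => t)
  -- E3
  have hg3 : Function.Injective
      (Sum.elim (fun t : α × β => (t.2, ((f t.2, (none : Option β)), t.1)))
        (fun t : α × β => (t.2, ((f t.2, some t.2), t.1)))) := by
    intro a b hab
    rcases a with a | a <;> rcases b with b | b <;>
      simp [Prod.ext_iff] at hab ⊢ <;> tauto
  have E3 : ent μ (fun ω => (X ω, (f (X ω), if S ω then (none : Option β) else some (X ω)), U ω))
      = -(p * Real.logb 2 p) - ((1-p) * Real.logb 2 (1-p))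
        + p * ent μ (fun ω => (U ω, X ω)) + (1-p) * ent μ (fun ω => (U ω, X ω)) := by
    have hrec := ent_comp_inj μ
      (fun ω => if S ω then (Sum.inl (U ω, X ω) : (α × β) ⊕ (α × β)) else Sum.inr (U ω, X ω))
      _ hg3
    rw [show (fun ω => (X ω, (f (X ω), if S ω then (none : Option β) else some (X ω)), U ω))
        = (fun ω => Sum.elim (fun t : α × β => (t.2, ((f t.2, (none : Option β)), t.1)))
            (fun t : α × β => (t.2, ((f t.2, some t.2), t.1)))
            (if S ω then (Sum.inl (U ω, X ω) : (α × β) ⊕ (α × β)) else Sum.inr (U ω, X ω))) from by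
      funext ω; by_cases h : S ω <;> simp [h]]
    rw [hrec]
    exact ent_mix μ hμ S (fun ω => (U ω, X ω)) p hp hS hindep (fun t => t) (fun t => t)
  -- E4
  have hg4 : Function.Injective
      (Sum.elim (fun _ : Unit => (none : Option β)) some) := by
    intro a b hab
    rcases a with a | a <;> rcases b with b | b <;> simp at hab ⊢ <;> tauto
  have E4 : ent μ (fun ω => if S ω then (none : Option β) else some (X ω))
      = -(p * Real.logb 2 p) - ((1-p) * Real.logb 2 (1-p))
        + (1-p) * ent μ X := by
    have hrec := ent_comp_inj μ
      (fun ω => if S ω then (Sum.inl () : Unit ⊕ β) else Sum.inr (X ω)) _ hg4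
    rw [show (fun ω => if S ω then (none : Option β) else some (X ω))
        = (fun ω => Sum.elim (fun _ : Unit => (none : Option β)) some
            (if S ω then (Sum.inl () : Unit ⊕ β) else Sum.inr (X ω))) from by
      funext ω; by_cases h : S ω <;> simp [h]]
    rw [hrec]
    have := ent_mix μ hμ S (fun ω => (U ω, X ω)) p hp hS hindep
      (fun _ => ()) (fun t => t.2)
    rw [show ent μ (fun ω => if S ω then (Sum.inl () : Unit ⊕ β) else Sum.inr (X ω))
        = ent μ (fun ω => if S ω then
            (Sum.inl ((fun _ : α × β => ()) (U ω, X ω)) : Unit ⊕ β)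
            else Sum.inr ((fun t : α × β => t.2) (U ω, X ω))) from rfl, this]
    rw [show (fun ω => (fun _ : α × β => ()) (U ω, X ω)) = (fun _ : Ω => ()) from rfl,
      ent_unit μ hμ]
    ring
  -- E5
  have hg5 : Function.Injective
      (Sum.elim (fun u : α => (u, (none : Option β))) (fun t : α × β => (t.1, some t.2))) := by
    intro a b hab
    rcases a with a | a <;> rcases b with b | b <;>
      simp [Prod.ext_iff] at hab ⊢ <;> tauto
  have E5 : ent μ (fun ω => (U ω, if S ω then (none : Option β) else some (X ω)))
      = -(p * Real.logb 2 p) - ((1-p) * Real.logb 2 (1-p))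
        + p * ent μ U + (1-p) * ent μ (fun ω => (U ω, X ω)) := by
    have hrec := ent_comp_inj μ
      (fun ω => if S ω then (Sum.inl (U ω) : α ⊕ (α × β)) else Sum.inr (U ω, X ω)) _ hg5
    rw [show (fun ω => (U ω, if S ω then (none : Option β) else some (X ω)))
        = (fun ω => Sum.elim (fun u : α => (u, (none : Option β))) (fun t : α × β => (t.1, some t.2))
            (if S ω then (Sum.inl (U ω) : α ⊕ (α × β)) else Sum.inr (U ω, X ω))) from by
      funext ω; by_cases h : S ω <;> simp [h]]
    rw [hrec]
    exact ent_mix μ hμ S (fun ω => (U ω, X ω)) p hp hS hindep (fun t => t.1) (fun t => t)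
  -- E6
  have E6 : ent μ (fun ω => (X ω, f (X ω))) = ent μ X :=
    ent_comp_inj μ X (fun x => (x, f x)) (fun a b hab => congrArg Prod.fst hab)
  -- E7 : ent μ (fun ω => f (X ω)) stays as atom
  rw [E1, E2, E3, E4, E5, E6]
  ring

/-- If `Y = f(X)`, `S ~ Bernoulli(p)` is independent of `(U,X)`, and `Z` is the
erasure of `X` by `S`, then
`I(X;(Y,Z)|U) + I(U;Z) = H(Y) − p·I(U;Y) + (1−p)·H(X|Y)`. -/
theorem stmt14 {Ω α β γ : Type*} [Fintype Ω] [Fintype α] [Fintype β] [Fintype γ]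
    (μ : Ω → ℝ) (hμ : IsPMF μ) (U : Ω → α) (X : Ω → β) (Y : Ω → γ)
    (f : β → γ) (hf : ∀ ω, Y ω = f (X ω))
    (S : Ω → Bool) (p : ℝ) (hp : p ∈ Set.Icc (0:ℝ) 1) (hS : pr μ S true = p)
    (hindep : IndepRV μ S (fun ω => (U ω, X ω))) :
    cmi μ X
        (fun ω => (Y ω, if S ω then (none : Option β) else some (X ω))) U
      + mi μ U (fun ω => if S ω then (none : Option β) else some (X ω))
      = ent μ Y - p * mi μ U Y + (1 - p) * cent μ X Y := by
  simp only [cmi, mi, cent]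
  exact stmt14' μ hμ U X Y f hf S p hp hS hindep
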